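/- Let H = lp E 2, let M be a bounded linear operator on H, and let ν : ℕ → ℕ → [0,∞] satisfy ‖π_i ∘ M ∘ ι_j‖ ≤ ν i j for all i, j. Define matrix powers of ν in [0,∞] by ν⁽¹⁾ := ν and ν⁽ᵏ⁺¹⁾ i j := Σ_{m=0}^∞ ν i m · ν⁽ᵏ⁾ m j (sums of extended nonnegative reals). Then for every integer k ≥ 1, every ψ ∈ H and every i ∈ ℕ: ‖π_i (Mᵏ ψ)‖ ≤ Σ_{j=0}^∞ ν⁽ᵏ⁾ i j · ‖π_j ψ‖, an inequality in [0,∞]. (The paper's lemma that powers of an operator on a Hilbert sum are dominated entrywise by the powers of any dominating scalar matrix.) -/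

import Mathlib

open scoped ENNReal NNReal

/-- The canonical isometric inclusion `ι_i : E i → lp E 2` as a continuous linear map. -/
noncomputable def lpIncl (E : ℕ → Type*) [∀ i, NormedAddCommGroup (E i)]
    [∀ i, InnerProductSpace ℂ (E i)] (i : ℕ) : E i →L[ℂ] lp E 2 :=
  LinearMap.mkContinuous
    { toFun := fun a => lp.single 2 i a
      map_add' := fun a b => by
        refine lp.ext (funext fun j => ?_)
        by_cases hj : j = i
        · subst hj
          simp [lp.single_apply_self]
        · simp [lp.single_apply_ne _ _ _ hj]
      map_smul' := fun c a => by simpa using lp.single_smul 2 i a c }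
    1 (fun a => by
      have h := lp.norm_single (E := E) (p := 2) (by norm_num) i a
      rw [one_mul]
      exact h.le)

/-- The canonical coordinate projection `π_i : lp E 2 → E i` as a continuous linear map. -/
noncomputable def lpProj (E : ℕ → Type*) [∀ i, NormedAddCommGroup (E i)]
    [∀ i, InnerProductSpace ℂ (E i)] (i : ℕ) : lp E 2 →L[ℂ] E i :=
  LinearMap.mkContinuous
    { toFun := fun ψ => ψ i
      map_add' := fun ψ φ => rfl
      map_smul' := fun c ψ => rfl }
    1 (fun ψ => by
      rw [one_mul]
      exact lp.norm_apply_le_norm (E := E) (p := 2) (by norm_num) ψ i)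

/-- The `(i,j)` chaos-matrix entry `T^i_j = π_i ∘ T ∘ ι_j` of a bounded operator on `lp E 2`. -/
noncomputable def lpEntry {E : ℕ → Type*} [∀ i, NormedAddCommGroup (E i)]
    [∀ i, InnerProductSpace ℂ (E i)] (T : lp E 2 →L[ℂ] lp E 2) (i j : ℕ) : E j →L[ℂ] E i :=
  (lpProj E i).comp (T.comp (lpIncl E j))

/-- Matrix powers of a scalar matrix with entries in `[0,∞]`: `nuPow ν n` is `ν^{n+1}`,
so `nuPow ν 0 = ν` and `(nuPow ν (n+1)) i j = Σ_m ν i m * (nuPow ν n) m j`. -/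
noncomputable def nuPow (ν : ℕ → ℕ → ℝ≥0∞) : ℕ → ℕ → ℕ → ℝ≥0∞
  | 0, i, j => ν i j
  | (n + 1), i, j => ∑' m : ℕ, ν i m * nuPow ν n m j

lemma ennnorm_le_tsum_of_hasSum {ι : Type*} {F : Type*} [NormedAddCommGroup F]
    [CompleteSpace F] {f : ι → F} {a : F} (h : HasSum f a) :
    (‖a‖₊ : ℝ≥0∞) ≤ ∑' i, (‖f i‖₊ : ℝ≥0∞) := by
  by_cases hs : Summable fun i => ‖f i‖₊
  · rw [← ENNReal.coe_tsum hs]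
    exact ENNReal.coe_le_coe.2 (h.tsum_eq ▸ nnnorm_tsum_le hs)
  · rw [← ENNReal.tsum_coe_ne_top_iff_summable, not_not] at hs
    simp [hs]

lemma lp_apply_le_tsum_entry {E : ℕ → Type*} [∀ i, NormedAddCommGroup (E i)]
    [∀ i, InnerProductSpace ℂ (E i)] [∀ i, CompleteSpace (E i)]
    (M : lp E 2 →L[ℂ] lp E 2) (φ : lp E 2) (i : ℕ) :
    (‖(M φ) i‖₊ : ℝ≥0∞) ≤ ∑' j : ℕ, (‖lpEntry M i j‖₊ : ℝ≥0∞) * (‖φ j‖₊ : ℝ≥0∞) := by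
  have h1 : HasSum (fun j : ℕ => lp.single 2 j (φ j)) φ :=
    lp.hasSum_single (by norm_num) φ
  have h2 : HasSum (fun j : ℕ => lpEntry M i j (φ j)) ((M φ) i) :=
    ((h1.mapL M).mapL (lpProj E i))
  refine (ennnorm_le_tsum_of_hasSum h2).trans ?_
  refine ENNReal.tsum_le_tsum fun j => ?_
  rw [← ENNReal.coe_mul]
  exact ENNReal.coe_le_coe.2 ((lpEntry M i j).le_opNNNorm _)

/-- Powers of an operator on a Hilbert sum are dominated entrywise by the powers of any
dominating scalar matrix: if `‖π_i ∘ M ∘ ι_j‖ ≤ ν i j` for all `i, j`, then for every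
`k = n + 1 ≥ 1`, every `ψ` and every `i`, `‖π_i (M^k ψ)‖ ≤ Σ_j ν⁽ᵏ⁾ i j ‖π_j ψ‖` in `[0,∞]`. -/
theorem entrywise_domination_of_powers
    {E : ℕ → Type*} [∀ i, NormedAddCommGroup (E i)] [∀ i, InnerProductSpace ℂ (E i)]
    [∀ i, CompleteSpace (E i)]
    (M : lp E 2 →L[ℂ] lp E 2) (ν : ℕ → ℕ → ℝ≥0∞)
    (hdom : ∀ i j : ℕ, (‖lpEntry M i j‖₊ : ℝ≥0∞) ≤ ν i j)
    (n : ℕ) (ψ : lp E 2) (i : ℕ) :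
    (‖((M ^ (n + 1)) ψ) i‖₊ : ℝ≥0∞) ≤ ∑' j : ℕ, nuPow ν n i j * (‖ψ j‖₊ : ℝ≥0∞) := by
  induction n generalizing i with
  | zero =>
    simpa [nuPow, pow_one] using
      (lp_apply_le_tsum_entry M ψ i).trans
        (ENNReal.tsum_le_tsum fun j => mul_le_mul_left (hdom i j) _)
  | succ n ih =>
    have hpow : (M ^ (n + 2)) ψ = M ((M ^ (n + 1)) ψ) := by
      rw [pow_succ']; rfl
    rw [hpow]
    calc (‖(M ((M ^ (n + 1)) ψ)) i‖₊ : ℝ≥0∞)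
        ≤ ∑' m : ℕ, (‖lpEntry M i m‖₊ : ℝ≥0∞) * (‖((M ^ (n + 1)) ψ) m‖₊ : ℝ≥0∞) :=
          lp_apply_le_tsum_entry M _ i
      _ ≤ ∑' m : ℕ, ν i m * ∑' j : ℕ, nuPow ν n m j * (‖ψ j‖₊ : ℝ≥0∞) :=
          ENNReal.tsum_le_tsum fun m => mul_le_mul' (hdom i m) (ih m)
      _ = ∑' j : ℕ, nuPow ν (n + 1) i j * (‖ψ j‖₊ : ℝ≥0∞) := by
          simp_rw [← ENNReal.tsum_mul_left, ← mul_assoc]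
          rw [ENNReal.tsum_comm]
          simp_rw [nuPow, ← ENNReal.tsum_mul_right]
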